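/- Let H be a finite abelian group and ρ : H^{k+1} → ℤ^d a (full) k-cocycle, meaning ρ(c) = ρ(c^u) − ρ(c_u) for all cubes c ∈ H^{k+1}, directions 1 ≤ i ≤ k, and u ∈ H. Then the function λ(x) = E_{h∈H^k} ρ(x; h) (with values in ℝ^d) satisfies ∂λ(c) = ρ(c) for every cube c ∈ H^{k+1}. -/
import Mathlib

open Finset BigOperators

/-- Discrete derivative on a k-dimensional cube (x; h₁,...,h_k):
∂f(c) = Σ_{ω∈{0,1}^k} (−1)^{|ω|} f(x + ω·h). -/
def cder {H A : Type*} [AddCommGroup H] [AddCommGroup A] {k : ℕ}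
    (f : H → A) (x : H) (h : Fin k → H) : A :=
  ∑ ω : Fin k → Bool,
    ((-1 : ℤ) ^ (Finset.univ.filter fun i => ω i).card) •
      f (x + ∑ i : Fin k, if ω i then h i else 0)

-- workhorse: splitting a sum over functions at one coordinate
lemma sum_update_pi {α β M : Type*} [Fintype α] [DecidableEq α] [Fintype β]
    [AddCommMonoid M] (i : α) (F : (α → β) → M) :
    ∑ f : α → β, ∑ b : β, F (Function.update f i b) = (Fintype.card β) • ∑ f : α → β, F f := by
  classical
  let e := Equiv.funSplitAt i β
  have hupd : ∀ (p : β × ({ j // j ≠ i } → β)) (b : β),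
      Function.update (e.symm p) i b = e.symm (b, p.2) := by
    intro p b
    funext j
    by_cases hj : j = i
    · subst hj; simp [e, Equiv.funSplitAt, Equiv.piSplitAt, Function.update]
    · simp [e, Equiv.funSplitAt, Equiv.piSplitAt, Function.update, hj]
  have h1 : ∑ f : α → β, ∑ b : β, F (Function.update f i b)
      = ∑ p : β × ({ j // j ≠ i } → β), ∑ b : β, F (Function.update (e.symm p) i b) :=
    (Equiv.sum_comp e.symm _).symm
  have h2 : ∑ f : α → β, F f = ∑ p : β × ({ j // j ≠ i } → β), F (e.symm p) :=
    (Equiv.sum_comp e.symm _).symm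
  rw [h1, h2, Fintype.sum_prod_type, Fintype.sum_prod_type]
  simp only [hupd]
  rw [Finset.sum_comm]
  simp [Finset.sum_comm (s := (univ : Finset β)), card_univ, Finset.smul_sum]

section main
variable {H : Type*} [AddCommGroup H] [Fintype H] {k d : ℕ}

lemma cocycle_sum (ρ : H → (Fin k → H) → (Fin d → ℤ))
    (hcocycle : ∀ (x : H) (h : Fin k → H) (i : Fin k) (u : H),
      ρ x h = ρ x (Function.update h i (h i + u)) - ρ (x + h i) (Function.update h i u))
    (x : H) (g : Fin k → H) (i : Fin k) :
    ∑ u : H, (ρ x (Function.update g i u) - ρ (x + g i) (Function.update g i u))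
      = Fintype.card H • ρ x g := by
  have h1 : ∑ u : H, ρ x (Function.update g i u)
      = ∑ u : H, ρ x (Function.update g i (g i + u)) :=
    (Fintype.sum_equiv (Equiv.addLeft (g i))
      (fun u => ρ x (Function.update g i (g i + u)))
      (fun u => ρ x (Function.update g i u)) (fun u => rfl)).symm
  rw [Finset.sum_sub_distrib, h1, ← Finset.sum_sub_distrib]
  have : ∀ u : H, ρ x (Function.update g i (g i + u)) - ρ (x + g i) (Function.update g i u)
      = ρ x g := fun u => (hcocycle x g i u).symm
  simp [this, card_univ]

lemma smul_cancel {n : ℕ} (hn : n ≠ 0) {v w : Fin d → ℤ} (h : n • v = n • w) : v = w := by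
  funext j
  have hj := congrFun h j
  simp only [Pi.smul_apply, nsmul_eq_mul] at hj
  exact mul_left_cancel₀ (by exact_mod_cast hn) hj

lemma key_claim (ρ : H → (Fin k → H) → (Fin d → ℤ))
    (hcocycle : ∀ (x : H) (h : Fin k → H) (i : Fin k) (u : H),
      ρ x h = ρ x (Function.update h i (h i + u)) - ρ (x + h i) (Function.update h i u))
    (x : H) (h : Fin k → H) (S : Finset (Fin k)) :
    ∑ t : Fin k → H, ∑ ω : Fin k → Bool,
      ((-1 : ℤ) ^ (S.filter fun j => ω j = true).card) •
        ρ (x + ∑ j ∈ S, if ω j then h j else 0) (fun j => if j ∈ S then t j else h j)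
      = (2 ^ (k - S.card) * Fintype.card H ^ k) • ρ x h := by
  classical
  induction S using Finset.induction_on with
  | empty =>
      simp only [Finset.filter_empty, Finset.card_empty, pow_zero, one_smul,
        Finset.sum_empty, Finset.notMem_empty, if_false, add_zero]
      rw [Finset.sum_const, Finset.sum_const, card_univ, card_univ, smul_smul,
        Fintype.card_fun, Fintype.card_fun, Fintype.card_bool, Fintype.card_fin,
        Nat.sub_zero]
      rw [mul_comm]
  | @insert i S hiS IH =>
      have hSk : S.card < k := by
        have h2 : S ≠ Finset.univ := fun hS => hiS (hS ▸ Finset.mem_univ i)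
        have := Finset.card_lt_card (Finset.ssubset_univ_iff.mpr h2)
        simpa using this
      have hcard : (insert i S).card = S.card + 1 := Finset.card_insert_of_notMem hiS
      set cH := Fintype.card H with hcH
      have hcH0 : 2 * cH ≠ 0 := by
        have : 0 < cH := Fintype.card_pos
        omega
      -- (F3)
      have hg' : ∀ (t : Fin k → H) (u : H),
          (fun j => if j ∈ insert i S then Function.update t i u j else h j)
            = Function.update (fun j => if j ∈ S then t j else h j) i u := by
        intro t u
        funext j
        by_cases hj : j = i
        · subst hj; simp [Function.update_self, Finset.mem_insert_self]
        · simp [Function.update, hj, Finset.mem_insert]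
      have hfilt : ∀ (ω : Fin k → Bool) (b : Bool),
          (S.filter fun j => Function.update ω i b j = true)
            = S.filter fun j => ω j = true := by
        intro ω b
        apply Finset.filter_congr
        intro j hj
        have hji : j ≠ i := fun e => hiS (e ▸ hj)
        simp [Function.update, hji]
      have hsum : ∀ (ω : Fin k → Bool) (b : Bool),
          (∑ j ∈ S, if Function.update ω i b j then h j else 0)
            = ∑ j ∈ S, if ω j then h j else 0 := by
        intro ω b
        apply Finset.sum_congr rfl
        intro j hj
        have hji : j ≠ i := fun e => hiS (e ▸ hj)
        simp [Function.update, hji]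
      -- key1 : ω-split
      have key1 : ∀ t : Fin k → H,
          (2 : ℕ) • ∑ ω : Fin k → Bool,
            ((-1 : ℤ) ^ ((insert i S).filter fun j => ω j = true).card) •
              ρ (x + ∑ j ∈ insert i S, if ω j then h j else 0)
                (fun j => if j ∈ insert i S then t j else h j)
          = ∑ ω : Fin k → Bool,
            ((-1 : ℤ) ^ (S.filter fun j => ω j = true).card) •
              (ρ (x + ∑ j ∈ S, if ω j then h j else 0)
                  (fun j => if j ∈ insert i S then t j else h j)
               - ρ ((x + ∑ j ∈ S, if ω j then h j else 0) + h i)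
                  (fun j => if j ∈ insert i S then t j else h j)) := by
        intro t
        have hs := sum_update_pi (β := Bool) i
          (fun ω : Fin k → Bool =>
            ((-1 : ℤ) ^ ((insert i S).filter fun j => ω j = true).card) •
              ρ (x + ∑ j ∈ insert i S, if ω j then h j else 0)
                (fun j => if j ∈ insert i S then t j else h j))
        rw [Fintype.card_bool] at hs
        rw [← hs]
        apply Finset.sum_congr rfl
        intro ω _
        rw [Fintype.sum_bool]
        have h1 : ((insert i S).filter fun j => Function.update ω i true j = true)
            = insert i (S.filter fun j => ω j = true) := by
          rw [Finset.filter_insert]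
          simp [hfilt ω true]
        have hc1 : (insert i (S.filter fun j => ω j = true)).card
            = (S.filter fun j => ω j = true).card + 1 :=
          Finset.card_insert_of_notMem (by simp [hiS])
        have h2 : (∑ j ∈ insert i S, if Function.update ω i true j then h j else 0)
            = h i + ∑ j ∈ S, if ω j then h j else 0 := by
          rw [Finset.sum_insert hiS, hsum ω true]
          simp
        have h3 : ((insert i S).filter fun j => Function.update ω i false j = true)
            = S.filter fun j => ω j = true := by
          rw [Finset.filter_insert]
          simp [hfilt ω false]
        have h4 : (∑ j ∈ insert i S, if Function.update ω i false j then h j else 0)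
            = ∑ j ∈ S, if ω j then h j else 0 := by
          rw [Finset.sum_insert hiS, hsum ω false]
          simp
        rw [h1, hc1, h2, h3, h4]
        have hx : x + (h i + ∑ j ∈ S, if ω j then h j else 0)
            = (x + ∑ j ∈ S, if ω j then h j else 0) + h i := by abel
        rw [hx, pow_succ, mul_neg_one, neg_smul, smul_sub]
        abel
      -- key2 : t-part
      have key2 : ∀ y : H,
          cH • ∑ t : Fin k → H,
            (ρ y (fun j => if j ∈ insert i S then t j else h j)
             - ρ (y + h i) (fun j => if j ∈ insert i S then t j else h j))
          = cH • ∑ t : Fin k → H, ρ y (fun j => if j ∈ S then t j else h j) := by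
        intro y
        have hs := sum_update_pi (β := H) i
          (fun t : Fin k → H =>
            ρ y (fun j => if j ∈ insert i S then t j else h j)
             - ρ (y + h i) (fun j => if j ∈ insert i S then t j else h j))
        rw [← hcH] at hs
        rw [← hs, Finset.smul_sum]
        apply Finset.sum_congr rfl
        intro t _
        simp only [hg']
        have hgi : (fun j => if j ∈ S then t j else h j) i = h i := by simp [hiS]
        have hcs := cocycle_sum ρ hcocycle y (fun j => if j ∈ S then t j else h j) i
        simp only [if_neg hiS] at hcs
        rw [hcs, hcH]
      -- assembly
      apply smul_cancel hcH0
      calc (2 * cH) • ∑ t : Fin k → H, ∑ ω : Fin k → Bool,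
            ((-1 : ℤ) ^ ((insert i S).filter fun j => ω j = true).card) •
              ρ (x + ∑ j ∈ insert i S, if ω j then h j else 0)
                (fun j => if j ∈ insert i S then t j else h j)
          = cH • ∑ t : Fin k → H, (2 : ℕ) • ∑ ω : Fin k → Bool,
            ((-1 : ℤ) ^ ((insert i S).filter fun j => ω j = true).card) •
              ρ (x + ∑ j ∈ insert i S, if ω j then h j else 0)
                (fun j => if j ∈ insert i S then t j else h j) := by
            rw [mul_comm, mul_smul, Finset.smul_sum]
        _ = cH • ∑ t : Fin k → H, ∑ ω : Fin k → Bool,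
            ((-1 : ℤ) ^ (S.filter fun j => ω j = true).card) •
              (ρ (x + ∑ j ∈ S, if ω j then h j else 0)
                  (fun j => if j ∈ insert i S then t j else h j)
               - ρ ((x + ∑ j ∈ S, if ω j then h j else 0) + h i)
                  (fun j => if j ∈ insert i S then t j else h j)) := by
            exact congrArg _ (Finset.sum_congr rfl fun t _ => key1 t)
        _ = cH • ∑ ω : Fin k → Bool, ∑ t : Fin k → H,
            ((-1 : ℤ) ^ (S.filter fun j => ω j = true).card) •
              (ρ (x + ∑ j ∈ S, if ω j then h j else 0)
                  (fun j => if j ∈ insert i S then t j else h j)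
               - ρ ((x + ∑ j ∈ S, if ω j then h j else 0) + h i)
                  (fun j => if j ∈ insert i S then t j else h j)) := by
            rw [Finset.sum_comm]
        _ = ∑ ω : Fin k → Bool,
            ((-1 : ℤ) ^ (S.filter fun j => ω j = true).card) •
              (cH • ∑ t : Fin k → H,
                (ρ (x + ∑ j ∈ S, if ω j then h j else 0)
                    (fun j => if j ∈ insert i S then t j else h j)
                 - ρ ((x + ∑ j ∈ S, if ω j then h j else 0) + h i)
                    (fun j => if j ∈ insert i S then t j else h j))) := by
            rw [Finset.smul_sum]
            exact Finset.sum_congr rfl fun ω _ => by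
              rw [← Finset.smul_sum, smul_comm]
        _ = ∑ ω : Fin k → Bool,
            ((-1 : ℤ) ^ (S.filter fun j => ω j = true).card) •
              (cH • ∑ t : Fin k → H,
                ρ (x + ∑ j ∈ S, if ω j then h j else 0)
                  (fun j => if j ∈ S then t j else h j)) := by
            exact Finset.sum_congr rfl fun ω _ => by
              rw [key2 (x + ∑ j ∈ S, if ω j then h j else 0)]
        _ = ∑ ω : Fin k → Bool, cH • ∑ t : Fin k → H,
            ((-1 : ℤ) ^ (S.filter fun j => ω j = true).card) •
              ρ (x + ∑ j ∈ S, if ω j then h j else 0)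
                (fun j => if j ∈ S then t j else h j) := by
            refine Finset.sum_congr rfl fun ω _ => ?_
            rw [← Finset.smul_sum, smul_comm]
        _ = cH • ∑ ω : Fin k → Bool, ∑ t : Fin k → H,
            ((-1 : ℤ) ^ (S.filter fun j => ω j = true).card) •
              ρ (x + ∑ j ∈ S, if ω j then h j else 0)
                (fun j => if j ∈ S then t j else h j) := (Finset.smul_sum).symm
        _ = cH • ∑ t : Fin k → H, ∑ ω : Fin k → Bool,
            ((-1 : ℤ) ^ (S.filter fun j => ω j = true).card) •
              ρ (x + ∑ j ∈ S, if ω j then h j else 0)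
                (fun j => if j ∈ S then t j else h j) := congrArg _ Finset.sum_comm
        _ = cH • ((2 ^ (k - S.card) * cH ^ k) • ρ x h) := by rw [IH]
        _ = (2 * cH) • ((2 ^ (k - (insert i S).card) * cH ^ k) • ρ x h) := by
            rw [hcard, smul_smul, smul_smul]
            congr 1
            have he : k - S.card = (k - (S.card + 1)) + 1 := by omega
            rw [he, pow_succ]
            ring

end main

theorem cocycle_is_derivative {H : Type*} [AddCommGroup H] [Fintype H]
    {k d : ℕ} (hk : 1 ≤ k) (ρ : H → (Fin k → H) → (Fin d → ℤ))
    (hcocycle : ∀ (x : H) (h : Fin k → H) (i : Fin k) (u : H),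
      ρ x h = ρ x (Function.update h i (h i + u)) - ρ (x + h i) (Function.update h i u)) :
    ∀ (x : H) (h : Fin k → H),
      cder (fun y j => (∑ t : Fin k → H, (ρ y t j : ℝ)) / (Fintype.card H : ℝ) ^ k) x h
        = fun j => (ρ x h j : ℝ) := by
  intro x h
  have hclaim := key_claim ρ hcocycle x h Finset.univ
  simp only [Finset.mem_univ, if_true, Finset.card_univ, Fintype.card_fin, Nat.sub_self,
    pow_zero, one_mul] at hclaim
  have hZ : ∑ ω : Fin k → Bool,
      ((-1 : ℤ) ^ (Finset.univ.filter fun j => ω j = true).card) •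
        ∑ t : Fin k → H, ρ (x + ∑ i : Fin k, if ω i then h i else 0) t
      = (Fintype.card H ^ k) • ρ x h := by
    calc ∑ ω : Fin k → Bool,
        ((-1 : ℤ) ^ (Finset.univ.filter fun j => ω j = true).card) •
          ∑ t : Fin k → H, ρ (x + ∑ i : Fin k, if ω i then h i else 0) t
        = ∑ ω : Fin k → Bool, ∑ t : Fin k → H,
          ((-1 : ℤ) ^ (Finset.univ.filter fun j => ω j = true).card) •
            ρ (x + ∑ i : Fin k, if ω i then h i else 0) t :=
          Finset.sum_congr rfl fun ω _ => Finset.smul_sum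
      _ = ∑ t : Fin k → H, ∑ ω : Fin k → Bool,
          ((-1 : ℤ) ^ (Finset.univ.filter fun j => ω j = true).card) •
            ρ (x + ∑ i : Fin k, if ω i then h i else 0) t := Finset.sum_comm
      _ = (Fintype.card H ^ k) • ρ x h := hclaim
  funext j
  have hj := congrFun hZ j
  simp only [Finset.sum_apply, Pi.smul_apply, smul_eq_mul, nsmul_eq_mul] at hj
  have hN : ((Fintype.card H : ℝ)) ^ k ≠ 0 :=
    pow_ne_zero _ (Nat.cast_ne_zero.2 Fintype.card_ne_zero)
  simp only [cder, Finset.sum_apply, Pi.smul_apply]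
  simp only [zsmul_eq_mul]
  simp only [← mul_div_assoc]
  rw [← Finset.sum_div, div_eq_iff hN, mul_comm]
  exact_mod_cast hj
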